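/- Let Q₁,...,Q_n: ℝ^d → ℝ^d be (possibly correlated) unbiased compressors each satisfying E[Qᵢ(v)] = v and E[‖Qᵢ(v)-v‖²] ≤ ω‖v‖². Let x, x⁺, w₁,...,w_n ∈ ℝ^d, let c be a Bernoulli(p) variable independent of the compressors, and define wᵢ⁺ = x⁺ if c = 1, and wᵢ⁺ = wᵢ + Qᵢ(x⁺ - x) if c = 0. Then (1/n)∑ᵢ E[‖wᵢ⁺ - x⁺‖²] ≤ (1-p)·(1/n)∑ᵢ‖wᵢ - x‖² + (1-p)ω‖x⁺ - x‖². -/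

import Mathlib

open MeasureTheory

theorem stmt_13 {d n : ℕ} (hn : 1 ≤ n)
    {Ω₁ Ω₂ : Type*} [MeasurableSpace Ω₁] [MeasurableSpace Ω₂]
    (μ₁ : Measure Ω₁) (μ₂ : Measure Ω₂)
    [IsProbabilityMeasure μ₁] [IsProbabilityMeasure μ₂]
    (p : ℝ) (hp0 : 0 < p) (hp1 : p ≤ 1)
    (ω : ℝ) (hω : 0 ≤ ω)
    (Q : Fin n → Ω₂ → EuclideanSpace ℝ (Fin d) → EuclideanSpace ℝ (Fin d))
    (hQint : ∀ i v, Integrable (fun ξ => Q i ξ v) μ₂)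
    (hQsqint : ∀ i v, Integrable (fun ξ => ‖Q i ξ v - v‖^2) μ₂)
    (hQmean : ∀ i v, ∫ ξ, Q i ξ v ∂μ₂ = v)
    (hQvar : ∀ i v, ∫ ξ, ‖Q i ξ v - v‖^2 ∂μ₂ ≤ ω * ‖v‖^2)
    (c : Ω₁ → Bool) (hc : Measurable c)
    (hcp : μ₁ {ξ | c ξ = true} = ENNReal.ofReal p)
    (x xplus : EuclideanSpace ℝ (Fin d))
    (w : Fin n → EuclideanSpace ℝ (Fin d))
    (wplus : Fin n → Ω₁ × Ω₂ → EuclideanSpace ℝ (Fin d))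
    (hwplus : ∀ i ξ, wplus i ξ =
      if c ξ.1 = true then xplus else w i + Q i ξ.2 (xplus - x)) :
    (n : ℝ)⁻¹ * ∑ i, ∫ ξ, ‖wplus i ξ - xplus‖^2 ∂(μ₁.prod μ₂) ≤
      (1 - p) * ((n : ℝ)⁻¹ * ∑ i, ‖w i - x‖^2) + (1 - p) * ω * ‖xplus - x‖^2 := by
  set v := xplus - x with hv
  have h1p : 0 ≤ 1 - p := by linarith
  -- integral over μ₁ of the indicator of {c = false}
  have hind : ∫ ξ, (if c ξ = true then (0:ℝ) else 1) ∂μ₁ = 1 - p := by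
    have hmeas : MeasurableSet {ξ | c ξ = true} := by
      have := hc (measurableSet_singleton true)
      simpa [Set.preimage, Set.mem_singleton_iff] using this
    have heq : (fun ξ => (if c ξ = true then (0:ℝ) else 1)) =
        Set.indicator {ξ | c ξ = true}ᶜ (fun _ => (1:ℝ)) := by
      funext ξ
      by_cases h : c ξ = true <;> simp [h, Set.indicator]
    rw [heq, integral_indicator_const _ hmeas.compl]
    rw [measureReal_def, prob_compl_eq_one_sub hmeas, hcp]
    rw [ENNReal.toReal_sub_of_le (by exact_mod_cast ENNReal.ofReal_le_one.2 hp1) (by simp)]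
    simp [ENNReal.toReal_ofReal hp0.le]
  have key : ∀ i, ∫ ξ, ‖wplus i ξ - xplus‖^2 ∂(μ₁.prod μ₂)
      ≤ (1 - p) * (‖w i - x‖^2 + ω * ‖v‖^2) := by
    intro i
    set a := w i - x with ha
    have hform : ∀ ξ : Ω₁ × Ω₂, ‖wplus i ξ - xplus‖^2 =
        (if c ξ.1 = true then (0:ℝ) else 1) * ‖a + (Q i ξ.2 v - v)‖^2 := by
      intro ξ
      rw [hwplus]
      by_cases h : c ξ.1 = true
      · simp [h]
      · have hveq : w i + Q i ξ.2 v - xplus = a + (Q i ξ.2 v - v) := by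
          rw [ha, hv]; abel
        simp [h, hveq]
    have hsub : Integrable (fun ξ => Q i ξ v - v) μ₂ :=
      (hQint i v).sub (integrable_const v)
    have hinner0 : ∫ ξ, (inner ℝ a (Q i ξ v - v) : ℝ) ∂μ₂ = 0 := by
      rw [integral_inner hsub]
      rw [integral_sub (hQint i v) (integrable_const v), hQmean, integral_const]
      simp
    have h2 : ∫ ξ, ‖a + (Q i ξ v - v)‖^2 ∂μ₂ =
        ‖a‖^2 + ∫ ξ, ‖Q i ξ v - v‖^2 ∂μ₂ := by
      have hfun : (fun ξ => ‖a + (Q i ξ v - v)‖^2) =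
          fun ξ => (‖a‖^2 + 2 * inner ℝ a (Q i ξ v - v)) + ‖Q i ξ v - v‖^2 := by
        funext ξ
        exact norm_add_sq_real a (Q i ξ v - v)
      have hA : Integrable (fun ξ => ‖a‖^2 + 2 * inner ℝ a (Q i ξ v - v)) μ₂ :=
        (integrable_const _).add ((hsub.const_inner a).const_mul 2)
      have hB : Integrable (fun ξ => (2:ℝ) * inner ℝ a (Q i ξ v - v)) μ₂ :=
        (hsub.const_inner a).const_mul 2
      rw [hfun, integral_add hA (hQsqint i v),
        integral_add (integrable_const (‖a‖^2)) hB,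
        integral_const, integral_const_mul, hinner0]
      simp
    calc ∫ ξ, ‖wplus i ξ - xplus‖^2 ∂(μ₁.prod μ₂)
        = ∫ ξ : Ω₁ × Ω₂, (if c ξ.1 = true then (0:ℝ) else 1) *
            ‖a + (Q i ξ.2 v - v)‖^2 ∂(μ₁.prod μ₂) := by
          exact integral_congr_ae (Filter.Eventually.of_forall hform)
      _ = (1 - p) * (‖a‖^2 + ∫ ξ, ‖Q i ξ v - v‖^2 ∂μ₂) := by
          rw [integral_prod_mul (fun ξ₁ => (if c ξ₁ = true then (0:ℝ) else 1))
            (fun ξ₂ => ‖a + (Q i ξ₂ v - v)‖^2), hind, h2]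
      _ ≤ (1 - p) * (‖a‖^2 + ω * ‖v‖^2) := by
          apply mul_le_mul_of_nonneg_left _ h1p
          linarith [hQvar i v]
  have hsum : ∑ i, ∫ ξ, ‖wplus i ξ - xplus‖^2 ∂(μ₁.prod μ₂)
      ≤ ∑ i, (1 - p) * (‖w i - x‖^2 + ω * ‖v‖^2) :=
    Finset.sum_le_sum fun i _ => key i
  have hnpos : (0:ℝ) < n := by exact_mod_cast hn
  have hstep : (n : ℝ)⁻¹ * ∑ i, ∫ ξ, ‖wplus i ξ - xplus‖^2 ∂(μ₁.prod μ₂)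
      ≤ (n : ℝ)⁻¹ * ∑ i, (1 - p) * (‖w i - x‖^2 + ω * ‖v‖^2) :=
    mul_le_mul_of_nonneg_left hsum (by positivity)
  refine hstep.trans_eq ?_
  have : ∑ i, (1 - p) * (‖w i - x‖^2 + ω * ‖v‖^2)
      = (1 - p) * (∑ i, ‖w i - x‖^2) + (n : ℝ) * ((1 - p) * (ω * ‖v‖^2)) := by
    simp [Finset.mul_sum, mul_add, Finset.sum_add_distrib, Finset.sum_const, mul_comm]
  rw [this]
  field_simp
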